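/- Unique decomposition / progress for by-need: every closed de Bruijn term M is either an answer A[V], or there exist a unique evaluation context E and unique by-need redex r (deref, assoc-L, or assoc-R) such that M = E[r]. -/

import Mathlib

inductive Tm : Type
  | var : Nat → Tm
  | lam : Tm → Tm
  | app : Tm → Tm → Tm
deriving DecidableEq

/-- shift ↑(M, x, m): increment all indices ≥ m by x -/
def shift : Tm → Nat → Nat → Tm
  | .var n, x, m => if n ≥ m then .var (n + x) else .var n
  | .lam M, x, m => .lam (shift M x (m+1))
  | .app M N, x, m => .app (shift M x m) (shift N x m)

/-- apply a renaming environment R to a term: (R)n = n + R(n) -/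
def ren : List Nat → Tm → Tm
  | R, .var n => .var (n + R.getD n 0)
  | R, .lam M => .lam (ren (0 :: R) M)
  | R, .app M N => .app (ren R M) (ren R N)

/-- values are lambda abstractions -/
def IsVal (M : Tm) : Prop := ∃ M', M = Tm.lam M'

/-- Evaluation contexts E ::= [] | E M | (λ.E) M | (λ.E'[n]) E with n = Δ(E') -/
inductive ECtx : Type
  | hole : ECtx
  | appL : ECtx → Tm → ECtx
  | bind : ECtx → Tm → ECtx
  | opC  : ECtx → ECtx → ECtx

/-- Δ : E → ℕ -/
def delta : ECtx → Nat
  | .hole => 0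
  | .appL E _ => delta E
  | .bind E _ => delta E + 1
  | .opC _ E => delta E

/-- plugging E[M]; in the opC case the bound variable is Δ(E') -/
def plugE : ECtx → Tm → Tm
  | .hole, M => M
  | .appL E N, M => .app (plugE E M) N
  | .bind E N, M => .app (.lam (plugE E M)) N
  | .opC E' E, M => .app (.lam (plugE E' (.var (delta E')))) (plugE E M)

/-- Answer contexts A ::= [] | (λ.A) M -/
inductive ACtx : Type
  | hole : ACtx
  | bind : ACtx → Tm → ACtx
deriving DecidableEq

def plugA : ACtx → Tm → Tm
  | .hole, M => M
  | .bind A N, M => .app (.lam (plugA A M)) N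

/-- by-need redexes: deref, assoc-L, assoc-R -/
inductive IsRedex : Tm → Prop
  | deref : ∀ (E : ECtx) (n : Nat) (V : Tm), IsVal V → delta E = n →
      IsRedex (.app (.lam (plugE E (.var n))) V)
  | assocL : ∀ (A : ACtx) (V M N : Tm), IsVal V →
      IsRedex (.app (.app (.lam (plugA A V)) M) N)
  | assocR : ∀ (E : ECtx) (n : Nat) (A : ACtx) (V M : Tm), IsVal V → delta E = n →
      IsRedex (.app (.lam (plugE E (.var n))) (.app (.lam (plugA A V)) M))

/-- closed at depth d -/
def ClosedAt : Tm → Nat → Prop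
  | .var n, d => n < d
  | .lam M, d => ClosedAt M (d+1)
  | .app M N, d => ClosedAt M d ∧ ClosedAt N d

def IsAnswer (M : Tm) : Prop := ∃ (A : ACtx) (V : Tm), IsVal V ∧ M = plugA A V

/-! ### Auxiliary lemmas -/

theorem redex_is_app {r : Tm} (h : IsRedex r) : ∃ a b, r = Tm.app a b := by
  cases h <;> exact ⟨_, _, rfl⟩

theorem dem_not_lam (E : ECtx) (n : Nat) (P : Tm) : plugE E (Tm.var n) ≠ Tm.lam P := by
  cases E <;> simp [plugE]

theorem dec_not_lam {r : Tm} (h : IsRedex r) (E : ECtx) (P : Tm) : plugE E r ≠ Tm.lam P := by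
  cases E
  · obtain ⟨a, b, rfl⟩ := redex_is_app h
    simp [plugE]
  all_goals simp [plugE]

theorem dec_not_var {r : Tm} (h : IsRedex r) (E : ECtx) (n : Nat) : plugE E r ≠ Tm.var n := by
  cases E
  · obtain ⟨a, b, rfl⟩ := redex_is_app h
    simp [plugE]
  all_goals simp [plugE]

theorem ans_not_dem : ∀ (A : ACtx) (V : Tm) (E : ECtx) (n : Nat), IsVal V → delta E ≤ n →
    plugA A V ≠ plugE E (Tm.var n) := by
  intro A
  induction A with
  | hole =>
    intro V E n hV _ h
    obtain ⟨P, rfl⟩ := hV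
    exact dem_not_lam E n P h.symm
  | bind A' N ih =>
    intro V E n hV hn h
    cases E with
    | hole => simp [plugA, plugE] at h
    | appL E1 M =>
      simp [plugA, plugE] at h
      exact dem_not_lam E1 n _ h.1.symm
    | bind E1 M =>
      simp [plugA, plugE] at h
      simp [delta] at hn
      exact ih V E1 n hV (by omega) h.1
    | opC E1 E2 =>
      simp [plugA, plugE] at h
      exact ih V E1 (delta E1) hV le_rfl h.1

theorem ansapp_no_dem (A : ACtx) (V M : Tm) (E : ECtx) (n : Nat) (hV : IsVal V)
    (hn : delta E ≤ n) : Tm.app (Tm.lam (plugA A V)) M ≠ plugE E (Tm.var n) := by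
  intro h
  cases E with
  | hole => simp [plugE] at h
  | appL E1 N =>
    simp [plugE] at h
    exact dem_not_lam E1 n _ h.1.symm
  | bind E1 N =>
    simp [plugE] at h
    simp [delta] at hn
    exact ans_not_dem A V E1 n hV (by omega) h.1
  | opC E1 E2 =>
    simp [plugE] at h
    exact ans_not_dem A V E1 (delta E1) hV le_rfl h.1

theorem ans_not_dec : ∀ (A : ACtx) (V : Tm) (E : ECtx) (r : Tm), IsVal V → IsRedex r →
    plugA A V ≠ plugE E r := by
  intro A
  induction A with
  | hole =>
    intro V E r hV hr h
    obtain ⟨P, rfl⟩ := hV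
    exact dec_not_lam hr E P h.symm
  | bind A' N ih =>
    intro V E r hV hr h
    cases E with
    | hole =>
      simp only [plugE] at h
      cases hr with
      | deref E0 n V0 hV0 hd =>
        simp [plugA] at h
        exact ans_not_dem A' V E0 n hV (le_of_eq hd) h.1
      | assocL A0 V0 M0 N0 hV0 =>
        simp [plugA] at h
      | assocR E0 n A0 V0 M0 hV0 hd =>
        simp [plugA] at h
        exact ans_not_dem A' V E0 n hV (le_of_eq hd) h.1
    | appL E1 M =>
      simp [plugA, plugE] at h
      exact dec_not_lam hr E1 _ h.1.symm
    | bind E1 M =>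
      simp [plugA, plugE] at h
      exact ih V E1 r hV hr h.1
    | opC E1 E2 =>
      simp [plugA, plugE] at h
      exact ans_not_dem A' V E1 (delta E1) hV le_rfl h.1

theorem dem_unique : ∀ (E E' : ECtx) (n n' : Nat), delta E ≤ n → delta E' ≤ n' →
    plugE E (Tm.var n) = plugE E' (Tm.var n') → E = E' ∧ n = n' := by
  intro E
  induction E with
  | hole =>
    intro E' n n' _ _ h
    cases E' with
    | hole => simp [plugE] at h; exact ⟨rfl, h⟩
    | appL E1 M => simp [plugE] at h
    | bind E1 M => simp [plugE] at h
    | opC E1 E2 => simp [plugE] at h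
  | appL E1 N ih =>
    intro E' n n' hn hn' h
    cases E' with
    | hole => simp [plugE] at h
    | appL E1' N' =>
      simp [plugE] at h
      obtain ⟨he, hnn⟩ := ih E1' n n' hn hn' h.1
      subst he; subst hnn
      rw [h.2]
      exact ⟨rfl, rfl⟩
    | bind E1' N' =>
      simp [plugE] at h
      exact absurd h.1 (dem_not_lam E1 n _)
    | opC E1' E2' =>
      simp [plugE] at h
      exact absurd h.1 (dem_not_lam E1 n _)
  | bind E1 N ih =>
    intro E' n n' hn hn' h
    simp [delta] at hn
    cases E' with
    | hole => simp [plugE] at h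
    | appL E1' N' =>
      simp [plugE] at h
      exact absurd h.1.symm (dem_not_lam E1' n' _)
    | bind E1' N' =>
      simp [plugE] at h
      simp [delta] at hn'
      obtain ⟨he, hnn⟩ := ih E1' n n' (by omega) (by omega) h.1
      subst he; subst hnn
      rw [h.2]
      exact ⟨rfl, rfl⟩
    | opC E1' E2' =>
      simp [plugE] at h
      obtain ⟨he, hnn⟩ := ih E1' n (delta E1') (by omega) le_rfl h.1
      subst he
      omega
  | opC E1 E2 ih1 ih2 =>
    intro E' n n' hn hn' h
    simp [delta] at hn
    cases E' with
    | hole => simp [plugE] at h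
    | appL E1' N' =>
      simp [plugE] at h
      exact absurd h.1.symm (dem_not_lam E1' n' _)
    | bind E1' N' =>
      simp [plugE] at h
      simp [delta] at hn'
      obtain ⟨he, hnn⟩ := ih1 E1' (delta E1) n' le_rfl (by omega) h.1
      subst he
      omega
    | opC E1' E2' =>
      simp [plugE] at h
      obtain ⟨he1, _⟩ := ih1 E1' (delta E1) (delta E1') le_rfl le_rfl h.1
      obtain ⟨he2, hnn⟩ := ih2 E2' n n' hn hn' h.2
      subst he1; subst he2; subst hnn
      exact ⟨rfl, rfl⟩

theorem ansapp_no_dec (A : ACtx) (V M : Tm) (E : ECtx) (r : Tm) (hV : IsVal V) (hr : IsRedex r) :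
    Tm.app (Tm.lam (plugA A V)) M ≠ plugE E r := by
  intro h
  cases E with
  | hole =>
    simp only [plugE] at h
    cases hr with
    | deref E0 n V0 hV0 hd =>
      simp at h
      exact ans_not_dem A V E0 n hV (le_of_eq hd) h.1
    | assocL A0 V0 M0 N0 hV0 => simp at h
    | assocR E0 n A0 V0 M0 hV0 hd =>
      simp at h
      exact ans_not_dem A V E0 n hV (le_of_eq hd) h.1
  | appL E1 N =>
    simp [plugE] at h
    exact dec_not_lam hr E1 _ h.1.symm
  | bind E1 N =>
    simp [plugE] at h
    exact ans_not_dec A V E1 r hV hr h.1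
  | opC E1 E2 =>
    simp [plugE] at h
    exact ans_not_dem A V E1 (delta E1) hV le_rfl h.1

theorem dem_not_dec : ∀ (E : ECtx) (n : Nat) (E' : ECtx) (r : Tm), delta E ≤ n → IsRedex r →
    plugE E (Tm.var n) ≠ plugE E' r := by
  intro E
  induction E with
  | hole =>
    intro n E' r _ hr h
    exact dec_not_var hr E' n h.symm
  | appL E1 N ih =>
    intro n E' r hn hr h
    cases E' with
    | hole =>
      simp only [plugE] at h
      cases hr with
      | deref E0 m V0 hV0 hd =>
        simp at h
        exact dem_not_lam E1 n _ h.1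
      | assocL A0 V0 M0 N0 hV0 =>
        simp at h
        exact ansapp_no_dem A0 V0 M0 E1 n hV0 hn h.1.symm
      | assocR E0 m A0 V0 M0 hV0 hd =>
        simp at h
        exact dem_not_lam E1 n _ h.1
    | appL E1' N' =>
      simp [plugE] at h
      exact ih n E1' r hn hr h.1
    | bind E1' N' =>
      simp [plugE] at h
      exact dem_not_lam E1 n _ h.1
    | opC E1' E2' =>
      simp [plugE] at h
      exact dem_not_lam E1 n _ h.1
  | bind E1 N ih =>
    intro n E' r hn hr h
    simp [delta] at hn
    cases E' with
    | hole =>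
      simp only [plugE] at h
      cases hr with
      | deref E0 m V0 hV0 hd =>
        simp at h
        obtain ⟨he, hnn⟩ := dem_unique E1 E0 n m (by omega) (le_of_eq hd) h.1
        subst he
        omega
      | assocL A0 V0 M0 N0 hV0 => simp at h
      | assocR E0 m A0 V0 M0 hV0 hd =>
        simp at h
        obtain ⟨he, hnn⟩ := dem_unique E1 E0 n m (by omega) (le_of_eq hd) h.1
        subst he
        omega
    | appL E1' N' =>
      simp [plugE] at h
      exact dec_not_lam hr E1' _ h.1.symm
    | bind E1' N' =>
      simp [plugE] at h
      exact ih n E1' r (by omega) hr h.1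
    | opC E1' E2' =>
      simp [plugE] at h
      obtain ⟨he, hnn⟩ := dem_unique E1 E1' n (delta E1') (by omega) le_rfl h.1
      subst he
      omega
  | opC E1 E2 ih1 ih2 =>
    intro n E' r hn hr h
    simp [delta] at hn
    cases E' with
    | hole =>
      simp only [plugE] at h
      cases hr with
      | deref E0 m V0 hV0 hd =>
        obtain ⟨P, rfl⟩ := hV0
        simp at h
        exact dem_not_lam E2 n P h.2
      | assocL A0 V0 M0 N0 hV0 => simp at h
      | assocR E0 m A0 V0 M0 hV0 hd =>
        simp at h
        exact ansapp_no_dem A0 V0 M0 E2 n hV0 hn h.2.symm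
    | appL E1' N' =>
      simp [plugE] at h
      exact dec_not_lam hr E1' _ h.1.symm
    | bind E1' N' =>
      simp [plugE] at h
      exact ih1 (delta E1) E1' r le_rfl hr h.1
    | opC E1' E2' =>
      simp [plugE] at h
      exact ih2 n E2' r hn hr h.2

/-- the case where one context is the hole -/
theorem red_hole {r r' : Tm} (E' : ECtx) (hr : IsRedex r) (hr' : IsRedex r')
    (h : r = plugE E' r') : E' = ECtx.hole := by
  cases E' with
  | hole => rfl
  | appL E1 N =>
    exfalso
    simp only [plugE] at h
    cases hr with
    | deref E0 m V0 hV0 hd =>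
      simp at h
      exact dec_not_lam hr' E1 _ h.1.symm
    | assocL A0 V0 M0 N0 hV0 =>
      simp at h
      exact ansapp_no_dec A0 V0 M0 E1 r' hV0 hr' h.1
    | assocR E0 m A0 V0 M0 hV0 hd =>
      simp at h
      exact dec_not_lam hr' E1 _ h.1.symm
  | bind E1 N =>
    exfalso
    simp only [plugE] at h
    cases hr with
    | deref E0 m V0 hV0 hd =>
      simp at h
      exact dem_not_dec E0 m E1 r' (le_of_eq hd) hr' h.1
    | assocL A0 V0 M0 N0 hV0 => simp at h
    | assocR E0 m A0 V0 M0 hV0 hd =>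
      simp at h
      exact dem_not_dec E0 m E1 r' (le_of_eq hd) hr' h.1
  | opC E1 E2 =>
    exfalso
    simp only [plugE] at h
    cases hr with
    | deref E0 m V0 hV0 hd =>
      obtain ⟨P, rfl⟩ := hV0
      simp at h
      exact dec_not_lam hr' E2 P h.2.symm
    | assocL A0 V0 M0 N0 hV0 => simp at h
    | assocR E0 m A0 V0 M0 hV0 hd =>
      simp at h
      exact ansapp_no_dec A0 V0 M0 E2 r' hV0 hr' h.2

theorem red_unique : ∀ (E E' : ECtx) (r r' : Tm), IsRedex r → IsRedex r' →
    plugE E r = plugE E' r' → E = E' ∧ r = r' := by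
  intro E
  induction E with
  | hole =>
    intro E' r r' hr hr' h
    have he := red_hole E' hr hr' h
    subst he
    simp [plugE] at h
    exact ⟨rfl, h⟩
  | appL E1 N ih =>
    intro E' r r' hr hr' h
    cases E' with
    | hole =>
      have he := red_hole (ECtx.appL E1 N) hr' hr h.symm
      simp at he
    | appL E1' N' =>
      simp [plugE] at h
      obtain ⟨he, hrr⟩ := ih E1' r r' hr hr' h.1
      subst he; subst hrr
      rw [h.2]
      exact ⟨rfl, rfl⟩
    | bind E1' N' =>
      simp [plugE] at h
      exact absurd h.1 (dec_not_lam hr E1 _)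
    | opC E1' E2' =>
      simp [plugE] at h
      exact absurd h.1 (dec_not_lam hr E1 _)
  | bind E1 N ih =>
    intro E' r r' hr hr' h
    cases E' with
    | hole =>
      have he := red_hole (ECtx.bind E1 N) hr' hr h.symm
      simp at he
    | appL E1' N' =>
      simp [plugE] at h
      exact absurd h.1.symm (dec_not_lam hr' E1' _)
    | bind E1' N' =>
      simp [plugE] at h
      obtain ⟨he, hrr⟩ := ih E1' r r' hr hr' h.1
      subst he; subst hrr
      rw [h.2]
      exact ⟨rfl, rfl⟩
    | opC E1' E2' =>
      simp [plugE] at h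
      exact absurd h.1.symm (dem_not_dec E1' (delta E1') E1 r le_rfl hr)
  | opC E1 E2 ih1 ih2 =>
    intro E' r r' hr hr' h
    cases E' with
    | hole =>
      have he := red_hole (ECtx.opC E1 E2) hr' hr h.symm
      simp at he
    | appL E1' N' =>
      simp [plugE] at h
      exact absurd h.1.symm (dec_not_lam hr' E1' _)
    | bind E1' N' =>
      simp [plugE] at h
      exact absurd h.1 (dem_not_dec E1 (delta E1) E1' r' le_rfl hr')
    | opC E1' E2' =>
      simp [plugE] at h
      obtain ⟨he1, _⟩ := dem_unique E1 E1' (delta E1) (delta E1') le_rfl le_rfl h.1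
      obtain ⟨he2, hrr⟩ := ih2 E2' r r' hr hr' h.2
      subst he1; subst he2; subst hrr
      exact ⟨rfl, rfl⟩

/-! ### Existence -/

def tsize : Tm → Nat
  | .var _ => 1
  | .lam M => tsize M + 1
  | .app M N => tsize M + tsize N + 1

def IsDem (M : Tm) : Prop := ∃ (E : ECtx) (n : Nat), delta E ≤ n ∧ M = plugE E (Tm.var n)

def IsDec (M : Tm) : Prop := ∃ (E : ECtx) (r : Tm), IsRedex r ∧ M = plugE E r

theorem tricho : ∀ (k : Nat) (M : Tm), tsize M ≤ k → IsAnswer M ∨ IsDem M ∨ IsDec M := by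
  intro k
  induction k with
  | zero => intro M h; cases M <;> simp [tsize] at h
  | succ k ih =>
    intro M hM
    cases M with
    | var n =>
      exact Or.inr (Or.inl ⟨ECtx.hole, n, Nat.zero_le n, rfl⟩)
    | lam P =>
      exact Or.inl ⟨ACtx.hole, Tm.lam P, ⟨P, rfl⟩, rfl⟩
    | app M1 M2 =>
      simp [tsize] at hM
      rcases ih M1 (by omega) with ⟨A, V, hV, hA⟩ | ⟨E, n, hn, hE⟩ | ⟨E, r, hr, hE⟩
      · -- M1 is an answer
        cases A with
        | bind A' N =>
          -- assoc-L redex at the top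
          subst hA
          exact Or.inr (Or.inr ⟨ECtx.hole, _, IsRedex.assocL A' V N M2 hV, rfl⟩)
        | hole =>
          obtain ⟨P, rfl⟩ := hV
          simp [plugA] at hA
          subst hA
          -- M = app (lam P) M2 ; examine P
          rcases ih P (by simp [tsize] at hM ⊢; omega) with ⟨A, V, hV, hA⟩ | ⟨E, n, hn, hE⟩ | ⟨E, r, hr, hE⟩
          · -- answer under the binder
            exact Or.inl ⟨ACtx.bind A M2, V, hV, by simp [plugA, hA]⟩
          · rcases Nat.lt_or_ge (delta E) n with hlt | hge
            · -- demand escapes the binder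
              exact Or.inr (Or.inl ⟨ECtx.bind E M2, n, by simp [delta]; omega, by simp [plugE, hE]⟩)
            · -- n = delta E : demand on the bound variable; examine M2
              have hn' : n = delta E := le_antisymm hge hn
              subst hn'
              rcases ih M2 (by omega) with ⟨A2, V2, hV2, hA2⟩ | ⟨E2, m, hm, hE2⟩ | ⟨E2, r2, hr2, hE2⟩
              · cases A2 with
                | hole =>
                  -- deref redex
                  subst hE
                  refine Or.inr (Or.inr ⟨ECtx.hole, _, IsRedex.deref E (delta E) M2 ?_ rfl, rfl⟩)
                  rw [hA2]; exact hV2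
                | bind A2' N2 =>
                  -- assoc-R redex
                  subst hE; subst hA2
                  exact Or.inr (Or.inr ⟨ECtx.hole, _, IsRedex.assocR E (delta E) A2' V2 N2 hV2 rfl, by simp [plugE, plugA]⟩)
              · -- demand inside M2 : opC context
                subst hE; subst hE2
                exact Or.inr (Or.inl ⟨ECtx.opC E E2, m, by simp [delta]; omega, by simp [plugE]⟩)
              · -- redex inside M2 : opC context
                subst hE; subst hE2
                exact Or.inr (Or.inr ⟨ECtx.opC E E2, r2, hr2, by simp [plugE]⟩)
          · -- redex under the binder
            exact Or.inr (Or.inr ⟨ECtx.bind E M2, r, hr, by simp [plugE, hE]⟩)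
      · -- demand in M1
        subst hE
        exact Or.inr (Or.inl ⟨ECtx.appL E M2, n, hn, by simp [plugE]⟩)
      · -- redex in M1
        subst hE
        exact Or.inr (Or.inr ⟨ECtx.appL E M2, r, hr, by simp [plugE]⟩)

theorem closed_plug : ∀ (E : ECtx) (M : Tm) (d : Nat), ClosedAt (plugE E M) d →
    ClosedAt M (d + delta E) := by
  intro E
  induction E with
  | hole => intro M d h; simpa [delta, plugE] using h
  | appL E1 N ih =>
    intro M d h
    simp only [plugE, ClosedAt] at h
    simpa [delta] using ih M d h.1
  | bind E1 N ih =>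
    intro M d h
    simp only [plugE, ClosedAt] at h
    have := ih M (d+1) h.1
    simpa [delta, Nat.add_assoc, Nat.add_comm 1] using this
  | opC E1 E2 ih1 ih2 =>
    intro M d h
    simp only [plugE, ClosedAt] at h
    simpa [delta] using ih2 M d h.2

theorem unique_decomposition_progress :
    ∀ M : Tm, ClosedAt M 0 →
      IsAnswer M ∨ ∃! p : ECtx × Tm, IsRedex p.2 ∧ M = plugE p.1 p.2 := by
  intro M hM
  rcases tricho (tsize M) M le_rfl with hAns | ⟨E, n, hn, hE⟩ | ⟨E, r, hr, hE⟩
  · exact Or.inl hAns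
  · exfalso
    subst hE
    have := closed_plug E (Tm.var n) 0 hM
    simp [ClosedAt] at this
    omega
  · refine Or.inr ⟨(E, r), ⟨hr, hE⟩, ?_⟩
    rintro ⟨E', r'⟩ ⟨hr', hE'⟩
    obtain ⟨he, hrr⟩ := red_unique E' E r' r hr' hr (by rw [← hE, ← hE'])
    simp [he, hrr]
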